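/- Let N = 1 and write W = W₁. For every Schwartz function ψ ∈ 𝒮(ℝ, ℂ): X̂(Wψ) = W(ψ₁) where ψ₁(t) = −t·ψ(t), and Ŷ(Wψ) = W(ψ₂) where ψ₂(t) = −(1/(2πi))·ψ'(t). Thus under the Weil–Brezin–Zak transform the operators X̂ and Ŷ go over to the Schrödinger operators −x and −(1/(2πi))·d/dx on L²(ℝ, ℂ). -/

import Mathlib

noncomputable section

/-- Partial derivative in the first variable. -/
def pdx (φ : ℝ × ℝ → ℂ) (p : ℝ × ℝ) : ℂ := fderiv ℝ φ p (1, 0)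

/-- Partial derivative in the second variable. -/
def pdy (φ : ℝ × ℝ → ℂ) (p : ℝ × ℝ) : ℂ := fderiv ℝ φ p (0, 1)

/-- The operator `X̂ = (1/2πi)(∂/∂y − 2πiNx)`. -/
def Xhat (N : ℤ) (φ : ℝ × ℝ → ℂ) : ℝ × ℝ → ℂ := fun p =>
  (1 / (2 * (Real.pi : ℂ) * Complex.I)) *
    (pdy φ p - 2 * (Real.pi : ℂ) * Complex.I * (N : ℂ) * (p.1 : ℂ) * φ p)

/-- The operator `Ŷ = −(1/2πi) ∂/∂x`. -/
def Yhat (φ : ℝ × ℝ → ℂ) : ℝ × ℝ → ℂ := fun p =>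
  -(1 / (2 * (Real.pi : ℂ) * Complex.I)) * pdx φ p

/-- The Weil–Brezin–Zak transform `(W_N ψ)(x,y) = Σ_{k∈ℤ} ψ(x+k) e^{−2πiNky}`. -/
def WBZ (N : ℤ) (ψ : ℝ → ℂ) : ℝ × ℝ → ℂ := fun p =>
  ∑' k : ℤ, ψ (p.1 + k) * Complex.exp (-(2 * (Real.pi : ℂ) * Complex.I * (N : ℂ) * (k : ℂ) * (p.2 : ℂ)))

open Complex SchwartzMap ContinuousLinearMap Metric

/-- the constant in the exponent -/
def ck (k : ℤ) : ℂ := -(2 * (Real.pi : ℂ) * Complex.I * (k : ℂ))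

/-- the exponential factor -/
def ee (k : ℤ) (y : ℝ) : ℂ := Complex.exp (ck k * (y : ℂ))

/-- one term of the WBZ series -/
def term (ψ : ℝ → ℂ) (k : ℤ) (p : ℝ × ℝ) : ℂ := ψ (p.1 + k) * ee k p.2

/-- the derivative of one term of the WBZ series -/
def termD (ψ : 𝓢(ℝ, ℂ)) (k : ℤ) (p : ℝ × ℝ) : ℝ × ℝ →L[ℝ] ℂ :=
  (ContinuousLinearMap.snd ℝ ℝ ℝ).smulRight (ψ (p.1 + k) * (ck k * ee k p.2)) +
    (ContinuousLinearMap.fst ℝ ℝ ℝ).smulRight (ee k p.2 * deriv ψ (p.1 + k))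

lemma wbz_eq (f : ℝ → ℂ) : WBZ 1 f = fun p => ∑' k : ℤ, term f k p := by
  funext p
  refine tsum_congr fun k => ?_
  simp only [term, ee, ck, WBZ]
  norm_num

lemma norm_ee (k : ℤ) (y : ℝ) : ‖ee k y‖ = 1 := by
  have h : ck k * (y : ℂ) = ((-(2 * Real.pi * k * y) : ℝ) : ℂ) * Complex.I := by
    simp only [ck]; push_cast; ring
  rw [ee, h, Complex.norm_exp_ofReal_mul_I]

lemma norm_ck (k : ℤ) : ‖ck k‖ = 2 * Real.pi * |(k : ℝ)| := by
  simp only [ck, norm_neg, norm_mul, Complex.norm_I, Complex.norm_real,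
    Complex.norm_two, Complex.norm_intCast, Real.norm_eq_abs, abs_of_pos Real.pi_pos, mul_one]

lemma decay3 (φ : 𝓢(ℝ, ℂ)) : ∃ C : ℝ, 0 ≤ C ∧ ∀ t : ℝ, (1 + |t|) ^ 3 * ‖φ t‖ ≤ C := by
  obtain ⟨C0, hC0, h0⟩ := φ.decay 0 0
  obtain ⟨C1, hC1, h1⟩ := φ.decay 1 0
  obtain ⟨C2, hC2, h2⟩ := φ.decay 2 0
  obtain ⟨C3, hC3, h3⟩ := φ.decay 3 0
  simp only [norm_iteratedFDeriv_zero, Real.norm_eq_abs] at h0 h1 h2 h3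
  refine ⟨C0 + 3 * C1 + 3 * C2 + C3, by positivity, fun t => ?_⟩
  nlinarith [h0 t, h1 t, h2 t, h3 t, norm_nonneg (φ t), abs_nonneg t]

lemma term_bound (φ : 𝓢(ℝ, ℂ)) {C M x : ℝ} (hd : ∀ t, (1 + |t|) ^ 3 * ‖φ t‖ ≤ C)
    (hM : 0 ≤ M) (hx : |x| ≤ M) (k : ℤ) :
    (1 + |(k : ℝ)|) ^ 3 * ‖φ (x + k)‖ ≤ (1 + M) ^ 3 * C := by
  have h1 : 1 + |(k : ℝ)| ≤ (1 + M) * (1 + |x + k|) := by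
    have h2 : |(k : ℝ)| ≤ |x + k| + |x| := by
      have := abs_sub (x + (k : ℝ)) x
      simpa using this
    have h3 : (0:ℝ) ≤ |x + k| := abs_nonneg _
    nlinarith
  calc (1 + |(k : ℝ)|) ^ 3 * ‖φ (x + k)‖
      ≤ ((1 + M) * (1 + |x + (k:ℝ)|)) ^ 3 * ‖φ (x + k)‖ := by
        gcongr
    _ = (1 + M) ^ 3 * ((1 + |x + (k:ℝ)|) ^ 3 * ‖φ (x + k)‖) := by ring
    _ ≤ (1 + M) ^ 3 * C := by
        have := hd (x + k)
        gcongr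

lemma summable_aux : Summable (fun k : ℤ => ((1 + |(k : ℝ)|) ^ 2)⁻¹) := by
  have hnat : Summable (fun n : ℕ => ((1 + (n : ℝ)) ^ 2)⁻¹) := by
    have := (summable_nat_add_iff (f := fun n : ℕ => (((n : ℝ)) ^ 2)⁻¹) 1).mpr
      (Real.summable_nat_pow_inv.mpr one_lt_two)
    refine this.congr fun n => ?_
    push_cast
    ring_nf
  apply Summable.of_nat_of_neg
  · refine hnat.congr fun n => ?_
    simp [Nat.abs_cast]
  · refine hnat.congr fun n => ?_
    simp

lemma hasFDerivAt_term (ψ : 𝓢(ℝ, ℂ)) (k : ℤ) (p : ℝ × ℝ) :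
    HasFDerivAt (term (⇑ψ) k) (termD ψ k p) p := by
  have hx : HasFDerivAt (fun q : ℝ × ℝ => ψ (q.1 + k))
      ((ContinuousLinearMap.fst ℝ ℝ ℝ).smulRight (deriv ψ (p.1 + k))) p := by
    have h1 : HasFDerivAt (fun q : ℝ × ℝ => q.1 + (k : ℝ))
        (ContinuousLinearMap.fst ℝ ℝ ℝ) p := (hasFDerivAt_fst).add_const _
    have h2 : HasDerivAt (⇑ψ) (deriv ψ (p.1 + k)) (p.1 + k) :=
      (ψ.differentiableAt).hasDerivAt
    have h3 := (hasDerivAt_iff_hasFDerivAt.mp h2).comp p h1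
    have h4 : ((ContinuousLinearMap.toSpanSingleton ℝ (deriv ψ (p.1 + k))).comp
        (ContinuousLinearMap.fst ℝ ℝ ℝ)) =
        (ContinuousLinearMap.fst ℝ ℝ ℝ).smulRight (deriv ψ (p.1 + k)) := by
      ext v <;> simp
    rw [h4] at h3
    exact h3
  have hy : HasFDerivAt (fun q : ℝ × ℝ => ee k q.2)
      ((ContinuousLinearMap.snd ℝ ℝ ℝ).smulRight (ck k * ee k p.2)) p := by
    have h1 : HasFDerivAt (fun q : ℝ × ℝ => q.2) (ContinuousLinearMap.snd ℝ ℝ ℝ) p :=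
      hasFDerivAt_snd
    have h2 : HasDerivAt (fun y : ℝ => ee k y) (ck k * ee k p.2) p.2 := by
      have ha : HasDerivAt (fun y : ℝ => ck k * (y : ℂ)) (ck k) p.2 := by
        simpa using (Complex.ofRealCLM.hasDerivAt (x := p.2)).const_mul (ck k)
      have := ha.cexp
      simpa [ee, mul_comm] using this
    have h3 := (hasDerivAt_iff_hasFDerivAt.mp h2).comp p h1
    have h4 : ((ContinuousLinearMap.toSpanSingleton ℝ (ck k * ee k p.2)).comp
        (ContinuousLinearMap.snd ℝ ℝ ℝ)) =
        (ContinuousLinearMap.snd ℝ ℝ ℝ).smulRight (ck k * ee k p.2) := by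
      ext v <;> simp
    rw [h4] at h3
    exact h3
  have h5 := hx.mul hy
  have h6 : termD ψ k p =
      ψ (p.1 + k) • ((ContinuousLinearMap.snd ℝ ℝ ℝ).smulRight (ck k * ee k p.2)) +
        ee k p.2 • ((ContinuousLinearMap.fst ℝ ℝ ℝ).smulRight (deriv ψ (p.1 + k))) := by
    ext v <;> simp [termD, smul_eq_mul] <;> ring
  rw [h6]
  exact h5

set_option maxHeartbeats 1000000 in
lemma main_lemma (ψ : 𝓢(ℝ, ℂ)) (p : ℝ × ℝ) :
    Summable (fun k : ℤ => termD ψ k p) ∧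
    Summable (fun k : ℤ => term (⇑ψ) k p) ∧
    HasFDerivAt (fun q : ℝ × ℝ => ∑' k : ℤ, term (⇑ψ) k q) (∑' k : ℤ, termD ψ k p) p := by
  obtain ⟨C1, hC1, hd1⟩ := decay3 ψ
  obtain ⟨C2, hC2, hd2⟩ := decay3 (derivCLM ℝ ℂ ψ)
  set M : ℝ := |p.1| + 1 with hM
  have hM0 : 0 ≤ M := by positivity
  set D : ℝ := (1 + M) ^ 3 * (2 * Real.pi * C1 + C2) with hD
  set u : ℤ → ℝ := fun k => D * ((1 + |(k : ℝ)|) ^ 2)⁻¹ with hu_def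
  have hu : Summable u := summable_aux.mul_left D
  -- pointwise norm bound on termD
  have bound : ∀ (k : ℤ) (q : ℝ × ℝ), |q.1| ≤ M → ‖termD ψ k q‖ ≤ u k := by
    intro k q hq
    set a : ℝ := 1 + |(k : ℝ)| with ha
    have ha1 : 1 ≤ a := by simp [ha, abs_nonneg]
    have ha0 : 0 < a := lt_of_lt_of_le one_pos ha1
    have hb1 : a ^ 3 * ‖ψ (q.1 + k)‖ ≤ (1 + M) ^ 3 * C1 := term_bound ψ hd1 hM0 hq k
    have hb2 : a ^ 3 * ‖deriv ψ (q.1 + k)‖ ≤ (1 + M) ^ 3 * C2 := by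
      have := term_bound (derivCLM ℝ ℂ ψ) hd2 hM0 hq k
      simpa only [derivCLM_apply] using this
    have hk : |(k : ℝ)| ≤ a := by simp [ha]
    have hnorm : ‖termD ψ k q‖ ≤
        2 * Real.pi * |(k : ℝ)| * ‖ψ (q.1 + k)‖ + ‖deriv ψ (q.1 + k)‖ := by
      refine le_trans (norm_add_le _ _) ?_
      simp only [norm_smulRight_apply, norm_mul, norm_ck, norm_ee]
      have hsnd : ‖ContinuousLinearMap.snd ℝ ℝ ℝ‖ ≤ 1 := ContinuousLinearMap.norm_snd_le ℝ ℝ ℝ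
      have hfst : ‖ContinuousLinearMap.fst ℝ ℝ ℝ‖ ≤ 1 := ContinuousLinearMap.norm_fst_le ℝ ℝ ℝ
      nlinarith [mul_le_mul_of_nonneg_right hsnd
          (show (0:ℝ) ≤ ‖ψ (q.1 + ↑k)‖ * (2 * Real.pi * |(k:ℝ)| * 1) by positivity),
        mul_le_mul_of_nonneg_right hfst
          (show (0:ℝ) ≤ 1 * ‖deriv (⇑ψ) (q.1 + ↑k)‖ by positivity),
        norm_nonneg (ψ (q.1 + ↑k)), norm_nonneg (deriv (⇑ψ) (q.1 + ↑k))]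
    refine le_trans hnorm ?_
    simp only [hu_def]
    have key : a ^ 2 * (2 * Real.pi * |(k : ℝ)| * ‖ψ (q.1 + k)‖ + ‖deriv ψ (q.1 + k)‖) ≤ D := by
      have t1 : a ^ 2 * (2 * Real.pi * |(k : ℝ)| * ‖ψ (q.1 + k)‖)
          ≤ 2 * Real.pi * (a ^ 3 * ‖ψ (q.1 + k)‖) := by
        have h' : a ^ 2 * |(k : ℝ)| ≤ a ^ 3 := by nlinarith [sq_nonneg a]
        calc a ^ 2 * (2 * Real.pi * |(k : ℝ)| * ‖ψ (q.1 + k)‖)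
            = (2 * Real.pi * ‖ψ (q.1 + k)‖) * (a ^ 2 * |(k : ℝ)|) := by ring
          _ ≤ (2 * Real.pi * ‖ψ (q.1 + k)‖) * a ^ 3 :=
              mul_le_mul_of_nonneg_left h' (by positivity)
          _ = 2 * Real.pi * (a ^ 3 * ‖ψ (q.1 + k)‖) := by ring
      have h23 : a ^ 2 ≤ a ^ 3 := by nlinarith [sq_nonneg a]
      have t2 : a ^ 2 * ‖deriv ψ (q.1 + k)‖ ≤ a ^ 3 * ‖deriv ψ (q.1 + k)‖ :=
        mul_le_mul_of_nonneg_right h23 (norm_nonneg _)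
      have := Real.pi_pos
      rw [hD]
      nlinarith
    rw [← div_eq_mul_inv, ← ha, le_div_iff₀ (by positivity)]
    calc (2 * Real.pi * |(k:ℝ)| * ‖ψ (q.1 + ↑k)‖ + ‖deriv ψ (q.1 + ↑k)‖) * a ^ 2
        = a ^ 2 * (2 * Real.pi * |(k:ℝ)| * ‖ψ (q.1 + ↑k)‖ + ‖deriv ψ (q.1 + ↑k)‖) := by ring
      _ ≤ D := key
  -- summability of the series itself at any admissible point
  have summ_at : ∀ q : ℝ × ℝ, |q.1| ≤ M → Summable (fun k : ℤ => term (⇑ψ) k q) := by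
    intro q hq
    refine Summable.of_norm_bounded (g := fun k : ℤ => (1 + M) ^ 3 * C1 * ((1 + |(k : ℝ)|) ^ 2)⁻¹)
      (summable_aux.mul_left _) fun k => ?_
    set a : ℝ := 1 + |(k : ℝ)| with ha
    have ha1 : 1 ≤ a := by simp [ha, abs_nonneg]
    have hb1 : a ^ 3 * ‖ψ (q.1 + k)‖ ≤ (1 + M) ^ 3 * C1 := term_bound ψ hd1 hM0 hq k
    have e : ‖term (⇑ψ) k q‖ = ‖ψ (q.1 + k)‖ := by
      rw [term, norm_mul, norm_ee, mul_one]
    show ‖term (⇑ψ) k q‖ ≤ (1 + M) ^ 3 * C1 * ((1 + |(k : ℝ)|) ^ 2)⁻¹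
    rw [e, ← div_eq_mul_inv, ← ha, le_div_iff₀ (by positivity)]
    have h23 : a ^ 2 ≤ a ^ 3 := by nlinarith [sq_nonneg a]
    calc ‖ψ (q.1 + ↑k)‖ * a ^ 2 ≤ ‖ψ (q.1 + ↑k)‖ * a ^ 3 :=
          mul_le_mul_of_nonneg_left h23 (norm_nonneg _)
      _ = a ^ 3 * ‖ψ (q.1 + ↑k)‖ := by ring
      _ ≤ (1 + M) ^ 3 * C1 := hb1
  have hball : ∀ q : ℝ × ℝ, q ∈ Metric.ball p 1 → |q.1| ≤ M := by
    intro q hq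
    have h1 : dist q.1 p.1 ≤ dist q p := le_max_left _ _
    have h2 : dist q p < 1 := Metric.mem_ball.mp hq
    have h3 : |q.1 - p.1| < 1 := lt_of_le_of_lt (by rw [← Real.dist_eq]; exact h1) h2
    have := abs_sub_abs_le_abs_sub q.1 p.1
    rw [hM]
    linarith
  have hp : |p.1| ≤ M := by rw [hM]; linarith [abs_nonneg p.1]
  refine ⟨Summable.of_norm_bounded hu (fun k => bound k p hp), summ_at p hp, ?_⟩
  exact hasFDerivAt_tsum_of_isPreconnected hu Metric.isOpen_ball
    (convex_ball p 1).isPreconnected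
    (fun k q _ => hasFDerivAt_term ψ k q)
    (fun k q hq => bound k q (hball q hq))
    (Metric.mem_ball_self one_pos)
    (summ_at p hp)
    (Metric.mem_ball_self one_pos)

/-- Under the Weil–Brezin–Zak transform (with `N = 1`), `X̂` and `Ŷ` go over to
the Schrödinger operators `−x` and `−(1/2πi) d/dx` on `L²(ℝ, ℂ)`. -/
theorem wbz_intertwines_heisenberg (ψ : SchwartzMap ℝ ℂ) :
    Xhat 1 (WBZ 1 ⇑ψ) = WBZ 1 (fun t : ℝ => -(t : ℂ) * ψ t) ∧
    Yhat (WBZ 1 ⇑ψ) = WBZ 1 (fun t : ℝ => -(1 / (2 * (Real.pi : ℂ) * Complex.I)) * deriv (⇑ψ) t) := by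
  have h2pi : (2 * (Real.pi : ℂ) * Complex.I) ≠ 0 := by
    simp [Real.pi_ne_zero, Complex.I_ne_zero, Complex.ofReal_ne_zero]
  constructor
  · funext p
    obtain ⟨hTD, hT, hF⟩ := main_lemma ψ p
    have hfd : fderiv ℝ (WBZ 1 ⇑ψ) p = ∑' k : ℤ, termD ψ k p := by
      rw [wbz_eq]; exact hF.fderiv
    have hy : pdy (WBZ 1 ⇑ψ) p = ∑' k : ℤ, ψ (p.1 + k) * (ck k * ee k p.2) := by
      rw [pdy, hfd]
      have h := (hTD.hasSum.mapL (ContinuousLinearMap.apply ℝ ℂ ((0:ℝ), (1:ℝ)))).tsum_eq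
      simp only [ContinuousLinearMap.apply_apply] at h
      rw [← h]
      refine tsum_congr fun k => ?_
      simp [termD, smul_eq_mul]
    have hsum1 : Summable (fun k : ℤ => ψ (p.1 + k) * (ck k * ee k p.2)) := by
      have h := hTD.mapL (ContinuousLinearMap.apply ℝ ℂ ((0:ℝ), (1:ℝ)))
      simp only [ContinuousLinearMap.apply_apply] at h
      refine h.congr fun k => ?_
      simp [termD, smul_eq_mul]
    rw [Xhat, hy, wbz_eq (⇑ψ), wbz_eq (fun t : ℝ => -(t : ℂ) * ψ t)]
    simp only
    calc (1 / (2 * (Real.pi : ℂ) * Complex.I)) *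
          ((∑' k : ℤ, ψ (p.1 + k) * (ck k * ee k p.2)) -
            2 * (Real.pi : ℂ) * Complex.I * ((1 : ℤ) : ℂ) * (p.1 : ℂ) * ∑' k : ℤ, term (⇑ψ) k p)
        = (1 / (2 * (Real.pi : ℂ) * Complex.I)) *
          ((∑' k : ℤ, ψ (p.1 + k) * (ck k * ee k p.2)) -
            ∑' k : ℤ, (2 * (Real.pi : ℂ) * Complex.I * ((1 : ℤ) : ℂ) * (p.1 : ℂ)) * term (⇑ψ) k p) := by
          rw [tsum_mul_left]
      _ = (1 / (2 * (Real.pi : ℂ) * Complex.I)) *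
          ∑' k : ℤ, (ψ (p.1 + k) * (ck k * ee k p.2) -
            (2 * (Real.pi : ℂ) * Complex.I * ((1 : ℤ) : ℂ) * (p.1 : ℂ)) * term (⇑ψ) k p) := by
          rw [Summable.tsum_sub hsum1 (hT.mul_left _)]
      _ = ∑' k : ℤ, (1 / (2 * (Real.pi : ℂ) * Complex.I)) *
          (ψ (p.1 + k) * (ck k * ee k p.2) -
            (2 * (Real.pi : ℂ) * Complex.I * ((1 : ℤ) : ℂ) * (p.1 : ℂ)) * term (⇑ψ) k p) := by
          rw [tsum_mul_left]
      _ = ∑' k : ℤ, term (fun t : ℝ => -(t : ℂ) * ψ t) k p := by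
          refine tsum_congr fun k => ?_
          simp only [term, ck]
          push_cast
          field_simp
          ring
  · funext p
    obtain ⟨hTD, hT, hF⟩ := main_lemma ψ p
    have hfd : fderiv ℝ (WBZ 1 ⇑ψ) p = ∑' k : ℤ, termD ψ k p := by
      rw [wbz_eq]; exact hF.fderiv
    have hx : pdx (WBZ 1 ⇑ψ) p = ∑' k : ℤ, ee k p.2 * deriv (⇑ψ) (p.1 + k) := by
      rw [pdx, hfd]
      have h := (hTD.hasSum.mapL (ContinuousLinearMap.apply ℝ ℂ ((1:ℝ), (0:ℝ)))).tsum_eq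
      simp only [ContinuousLinearMap.apply_apply] at h
      rw [← h]
      refine tsum_congr fun k => ?_
      simp [termD, smul_eq_mul]
    rw [Yhat, hx, wbz_eq (fun t : ℝ => -(1 / (2 * (Real.pi : ℂ) * Complex.I)) * deriv (⇑ψ) t)]
    simp only
    rw [← tsum_mul_left]
    refine tsum_congr fun k => ?_
    simp only [term]
    ring
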